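/- Let Z be a finite-dimensional normed space with Auerbach basis (e_k, e_k*), contractively complemented in a normed space L via projection Q, and let E be an L-space (L ⊗ E carries a contractible cross-norm). For u ∈ L ⊗ E let I(u) : Z* → E, g ↦ (g ⊗ 1_E)(Q·u). Then (1_L ⊗ I(u))(w) = Q·u, where w = Σ_k e_k ⊗ e_k* ∈ L ⊗ Z*. Consequently ‖1_L ⊗ I(u)‖_{L⊗_ε Z* → L⊗E} = ‖Q·u‖. -/

import Mathlib

set_option maxHeartbeats 1000000
set_option synthInstance.maxHeartbeats 400000

noncomputable def injNorm (L E : Type*) [NormedAddCommGroup L] [NormedSpace ℝ L]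
    [NormedAddCommGroup E] [NormedSpace ℝ E] (u : TensorProduct ℝ L E) : ℝ :=
  ⨆ fg : Metric.closedBall (0 : L →L[ℝ] ℝ) 1 × Metric.closedBall (0 : E →L[ℝ] ℝ) 1,
    |TensorProduct.lid ℝ ℝ
      (TensorProduct.map ((fg.1 : L →L[ℝ] ℝ) : L →ₗ[ℝ] ℝ)
        ((fg.2 : E →L[ℝ] ℝ) : E →ₗ[ℝ] ℝ) u)|

noncomputable def Imap {L E : Type*} [NormedAddCommGroup L] [NormedSpace ℝ L]
    [AddCommGroup E] [Module ℝ E] (Zsub : Submodule ℝ L)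
    (Q : L →L[ℝ] L) (hmem : ∀ ξ, Q ξ ∈ Zsub)
    (u : TensorProduct ℝ L E) : (Zsub →L[ℝ] ℝ) →ₗ[ℝ] E where
  toFun g := TensorProduct.lid ℝ E
    (TensorProduct.map
      ((g : Zsub →ₗ[ℝ] ℝ) ∘ₗ LinearMap.codRestrict Zsub (Q : L →ₗ[ℝ] L) hmem)
      LinearMap.id u)
  map_add' g g' := by
    simp only [ContinuousLinearMap.coe_add, LinearMap.add_comp,
      TensorProduct.map_add_left, LinearMap.add_apply, map_add]
  map_smul' c g := by
    simp only [ContinuousLinearMap.coe_smul, LinearMap.smul_comp,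
      TensorProduct.map_smul_left, LinearMap.smul_apply, map_smul, RingHom.id_apply]

section Aux

variable {L Z : Type*} [NormedAddCommGroup L] [NormedSpace ℝ L]
  [NormedAddCommGroup Z] [NormedSpace ℝ Z]

/-- The map `J : L ⊗ Z* → Hom(Z, L)`, `ξ ⊗ g ↦ (z ↦ g z • ξ)`. -/
noncomputable def Jmap :
    TensorProduct ℝ L (Z →L[ℝ] ℝ) →ₗ[ℝ] (Z →ₗ[ℝ] L) :=
  TensorProduct.lift
  { toFun := fun ξ =>
    { toFun := fun g => (g : Z →ₗ[ℝ] ℝ).smulRight ξ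
      map_add' := by
        intros g g'; ext z
        simp only [ContinuousLinearMap.coe_add, LinearMap.smulRight_apply,
          LinearMap.add_apply, ContinuousLinearMap.add_apply, add_smul]
      map_smul' := by
        intros c g; ext z
        simp only [ContinuousLinearMap.coe_smul, LinearMap.smulRight_apply,
          LinearMap.smul_apply, ContinuousLinearMap.smul_apply, RingHom.id_apply,
          smul_smul, smul_eq_mul] }
    map_add' := by
      intros ξ ξ'; ext g z
      simp only [LinearMap.coe_mk, AddHom.coe_mk, LinearMap.smulRight_apply,
        LinearMap.add_apply, smul_add]
    map_smul' := by
      intros c ξ; ext g z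
      simp only [LinearMap.coe_mk, AddHom.coe_mk, LinearMap.smulRight_apply,
        LinearMap.smul_apply, RingHom.id_apply]
      rw [smul_comm] }

@[simp] lemma Jmap_tmul (ξ : L) (g : Z →L[ℝ] ℝ) (z : Z) :
    Jmap (ξ ⊗ₜ[ℝ] g) z = g z • ξ := rfl

lemma injNorm_nonneg (v : TensorProduct ℝ L Z) : 0 ≤ injNorm L Z v :=
  Real.iSup_nonneg fun _ => abs_nonneg _

lemma abs_pairing_le_injNorm (v : TensorProduct ℝ L Z)
    (f : L →L[ℝ] ℝ) (φ : Z →L[ℝ] ℝ) (hf : ‖f‖ ≤ 1) (hφ : ‖φ‖ ≤ 1) :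
    |TensorProduct.lid ℝ ℝ (TensorProduct.map (f : L →ₗ[ℝ] ℝ)
      (φ : Z →ₗ[ℝ] ℝ) v)| ≤ injNorm L Z v := by
  have hbdd : ∃ C : ℝ,
      ∀ p : Metric.closedBall (0 : L →L[ℝ] ℝ) 1 ×
          Metric.closedBall (0 : Z →L[ℝ] ℝ) 1,
        |TensorProduct.lid ℝ ℝ (TensorProduct.map ((p.1 : L →L[ℝ] ℝ) : L →ₗ[ℝ] ℝ)
          ((p.2 : Z →L[ℝ] ℝ) : Z →ₗ[ℝ] ℝ) v)| ≤ C := by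
    induction v using TensorProduct.induction_on with
    | zero => exact ⟨0, fun p => by simp⟩
    | tmul ξ g =>
      refine ⟨‖ξ‖ * ‖g‖, fun p => ?_⟩
      obtain ⟨⟨f', hf'⟩, ⟨φ', hφ'⟩⟩ := p
      rw [Metric.mem_closedBall, dist_zero_right] at hf' hφ'
      simp only [TensorProduct.map_tmul, TensorProduct.lid_tmul,
        ContinuousLinearMap.coe_coe, smul_eq_mul, abs_mul]
      calc |f' ξ| * |φ' g| ≤ (‖f'‖ * ‖ξ‖) * (‖φ'‖ * ‖g‖) :=
            mul_le_mul (f'.le_opNorm ξ) (φ'.le_opNorm g) (abs_nonneg _)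
              (by positivity)
        _ ≤ (1 * ‖ξ‖) * (1 * ‖g‖) := by gcongr <;> positivity
        _ = ‖ξ‖ * ‖g‖ := by ring
    | add v₁ v₂ h₁ h₂ =>
      obtain ⟨C₁, h₁⟩ := h₁
      obtain ⟨C₂, h₂⟩ := h₂
      refine ⟨C₁ + C₂, fun p => ?_⟩
      rw [map_add, map_add]
      exact (abs_add_le _ _).trans (add_le_add (h₁ p) (h₂ p))
  obtain ⟨C, hC⟩ := hbdd
  have hmemf : f ∈ Metric.closedBall (0 : L →L[ℝ] ℝ) 1 := by
    rwa [Metric.mem_closedBall, dist_zero_right]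
  have hmemφ : φ ∈ Metric.closedBall (0 : Z →L[ℝ] ℝ) 1 := by
    rwa [Metric.mem_closedBall, dist_zero_right]
  exact le_ciSup (⟨C, Set.forall_mem_range.mpr hC⟩ : BddAbove _)
    (⟨⟨f, hmemf⟩, ⟨φ, hmemφ⟩⟩ :
      Metric.closedBall (0 : L →L[ℝ] ℝ) 1 × Metric.closedBall (0 : Z →L[ℝ] ℝ) 1)

lemma injNorm_le (v : TensorProduct ℝ L Z) {c : ℝ} (hc : 0 ≤ c)
    (h : ∀ (f : L →L[ℝ] ℝ) (φ : Z →L[ℝ] ℝ), ‖f‖ ≤ 1 → ‖φ‖ ≤ 1 →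
      |TensorProduct.lid ℝ ℝ (TensorProduct.map (f : L →ₗ[ℝ] ℝ)
        (φ : Z →ₗ[ℝ] ℝ) v)| ≤ c) :
    injNorm L Z v ≤ c := by
  refine Real.iSup_le (fun p => ?_) hc
  obtain ⟨⟨f, hf⟩, ⟨φ, hφ⟩⟩ := p
  rw [Metric.mem_closedBall, dist_zero_right] at hf hφ
  exact h f φ hf hφ

lemma Jmap_eval (v : TensorProduct ℝ L (Z →L[ℝ] ℝ)) (z : Z) (f : L →L[ℝ] ℝ) :
    f (Jmap v z) =
      TensorProduct.lid ℝ ℝ (TensorProduct.map (f : L →ₗ[ℝ] ℝ)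
        (((ContinuousLinearMap.apply ℝ ℝ z : (Z →L[ℝ] ℝ) →L[ℝ] ℝ)) :
          (Z →L[ℝ] ℝ) →ₗ[ℝ] ℝ) v) := by
  induction v using TensorProduct.induction_on with
  | zero => simp
  | tmul ξ g => simp [mul_comm]
  | add v₁ v₂ h₁ h₂ => simp [map_add, h₁, h₂]

lemma Jmap_norm_le (v : TensorProduct ℝ L (Z →L[ℝ] ℝ)) (z : Z) :
    ‖Jmap v z‖ ≤ injNorm L (Z →L[ℝ] ℝ) v * ‖z‖ := by
  rcases eq_or_ne z 0 with rfl | hz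
  · simp
  · have hznorm : 0 < ‖z‖ := norm_pos_iff.mpr hz
    obtain ⟨f, hf1, hfx⟩ := exists_dual_vector'' ℝ (Jmap v z)
    set φ : (Z →L[ℝ] ℝ) →L[ℝ] ℝ := ‖z‖⁻¹ • (ContinuousLinearMap.apply ℝ ℝ z) with hφdef
    have hφ1 : ‖φ‖ ≤ 1 := by
      refine ContinuousLinearMap.opNorm_le_bound _ zero_le_one fun g => ?_
      simp only [hφdef, ContinuousLinearMap.smul_apply, ContinuousLinearMap.apply_apply,
        norm_smul, norm_inv, norm_norm]
      rw [one_mul]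
      calc ‖z‖⁻¹ * ‖g z‖ ≤ ‖z‖⁻¹ * (‖g‖ * ‖z‖) := by
            gcongr; exact g.le_opNorm z
        _ = ‖g‖ := by field_simp
    have hle := abs_pairing_le_injNorm v f φ hf1 hφ1
    have hval : TensorProduct.lid ℝ ℝ (TensorProduct.map (f : L →ₗ[ℝ] ℝ)
        (φ : (Z →L[ℝ] ℝ) →ₗ[ℝ] ℝ) v) = ‖z‖⁻¹ * ‖Jmap v z‖ := by
      have hcoe : (φ : (Z →L[ℝ] ℝ) →ₗ[ℝ] ℝ) =
          ‖z‖⁻¹ • ((ContinuousLinearMap.apply ℝ ℝ z : (Z →L[ℝ] ℝ) →L[ℝ] ℝ) :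
            (Z →L[ℝ] ℝ) →ₗ[ℝ] ℝ) := by
        ext g; simp [hφdef]
      rw [hcoe, TensorProduct.map_smul_right, LinearMap.smul_apply, map_smul,
        smul_eq_mul, ← Jmap_eval v z f, hfx]
      norm_cast
    rw [hval, abs_of_nonneg (by positivity)] at hle
    calc ‖Jmap v z‖ = (‖z‖⁻¹ * ‖Jmap v z‖) * ‖z‖ := by field_simp
      _ ≤ injNorm L (Z →L[ℝ] ℝ) v * ‖z‖ := by gcongr

end Aux
/-- For a finite-dimensional subspace `Z` of `L` with Auerbach basis
`(e_k, e_k*)`, contractively complemented via `Q`, and an `L`-space `E`: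
`(1_L ⊗ I(u))(w) = Q·u` where `w = Σ_k e_k ⊗ e_k*`; consequently the operator norm of
`1_L ⊗ I(u) : L ⊗_ε Z* → L ⊗ E` equals `‖Q·u‖` (and is attained). -/
theorem stmt13 {L E : Type*} [NormedAddCommGroup L] [NormedSpace ℝ L]
    [AddCommGroup E] [Module ℝ E]
    (Zsub : Submodule ℝ L) [FiniteDimensional ℝ Zsub]
    (Q : L →L[ℝ] L) (hQ1 : ‖Q‖ ≤ 1)
    (hmem : ∀ ξ, Q ξ ∈ Zsub) (hfix : ∀ z ∈ Zsub, Q z = z)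
    {n : ℕ} (b : Module.Basis (Fin n) ℝ Zsub) (estar : Fin n → (Zsub →L[ℝ] ℝ))
    (hdual : ∀ k l, estar k (b l) = if k = l then 1 else 0)
    (hb1 : ∀ k, ‖b k‖ = 1) (hestar1 : ∀ k, ‖estar k‖ = 1)
    (N : TensorProduct ℝ L E → ℝ)
    (hadd : ∀ u v, N (u + v) ≤ N u + N v)
    (hsmul : ∀ (c : ℝ) u, N (c • u) = |c| * N u)
    (hdef : ∀ u, N u = 0 ↔ u = 0)
    (hcontr : ∀ (a : L →L[ℝ] L) (u : TensorProduct ℝ L E),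
      N (LinearMap.rTensor E (a : L →ₗ[ℝ] L) u) ≤ ‖a‖ * N u) :
    ∀ u : TensorProduct ℝ L E,
      TensorProduct.map LinearMap.id (Imap Zsub Q hmem u)
          (∑ k, (b k : L) ⊗ₜ[ℝ] estar k) =
        LinearMap.rTensor E (Q : L →ₗ[ℝ] L) u ∧
      IsGreatest
        {r : ℝ | ∃ v : TensorProduct ℝ L (Zsub →L[ℝ] ℝ),
          injNorm L (Zsub →L[ℝ] ℝ) v ≤ 1 ∧
          r = N (TensorProduct.map LinearMap.id (Imap Zsub Q hmem u) v)}
        (N (LinearMap.rTensor E (Q : L →ₗ[ℝ] L) u)) := by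
  -- basic facts about N
  have hN0 : N 0 = 0 := (hdef 0).mpr rfl
  have hNnonneg : ∀ x, 0 ≤ N x := by
    intro x
    have h1 : N (x + (-1 : ℝ) • x) ≤ N x + N ((-1 : ℝ) • x) := hadd _ _
    rw [hsmul] at h1
    simp only [neg_one_smul, add_neg_cancel, hN0, abs_neg, abs_one, one_mul] at h1
    linarith
  set Qr : L →ₗ[ℝ] Zsub := LinearMap.codRestrict Zsub (Q : L →ₗ[ℝ] L) hmem with hQr
  -- coordinate functionals
  have hrepr : ∀ (z : Zsub) (k : Fin n), estar k z = b.repr z k := by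
    intro z k
    conv_lhs => rw [← b.sum_repr z]
    rw [map_sum]
    simp only [map_smul, hdual, smul_eq_mul, mul_ite, mul_one, mul_zero]
    simp
  have hexpandZ : ∀ z : Zsub, ∑ k, estar k z • b k = z := by
    intro z
    simp_rw [hrepr]
    exact b.sum_repr z
  have hexpand : ∀ z : Zsub, ∑ k, estar k z • (b k : L) = (z : L) := by
    intro z
    have h := congrArg (Submodule.subtype Zsub) (hexpandZ z)
    simpa using h
  -- Part 1
  have part1 : ∀ u : TensorProduct ℝ L E,
      TensorProduct.map LinearMap.id (Imap Zsub Q hmem u)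
          (∑ k, (b k : L) ⊗ₜ[ℝ] estar k) =
        LinearMap.rTensor E (Q : L →ₗ[ℝ] L) u := by
    intro u
    induction u using TensorProduct.induction_on with
    | zero => simp [Imap]
    | tmul ξ x =>
      rw [map_sum]
      have hterm : ∀ k, TensorProduct.map LinearMap.id (Imap Zsub Q hmem (ξ ⊗ₜ[ℝ] x))
          ((b k : L) ⊗ₜ[ℝ] estar k) = (estar k (Qr ξ)) • ((b k : L) ⊗ₜ[ℝ] x) := by
        intro k
        simp [Imap, TensorProduct.map_tmul, TensorProduct.lid_tmul, hQr,
          TensorProduct.tmul_smul]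
      simp_rw [hterm]
      rw [LinearMap.rTensor_tmul]
      have : (Q : L →ₗ[ℝ] L) ξ = ((Qr ξ : Zsub) : L) := rfl
      rw [this, ← hexpand (Qr ξ), TensorProduct.sum_tmul]
      refine Finset.sum_congr rfl fun k _ => ?_
      rw [TensorProduct.smul_tmul']
    | add u v hu hv =>
      have hIadd : Imap Zsub Q hmem (u + v) = Imap Zsub Q hmem u + Imap Zsub Q hmem v := by
        ext g
        simp [Imap]
      rw [hIadd, TensorProduct.map_add_right, LinearMap.add_apply, hu, hv, map_add]
  -- norm bound for Jmap (generic lemma instantiation)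
  have hJnorm : ∀ (v : TensorProduct ℝ L (Zsub →L[ℝ] ℝ)) (z : Zsub),
      ‖Jmap v z‖ ≤ injNorm L (Zsub →L[ℝ] ℝ) v * ‖z‖ := fun v z => Jmap_norm_le v z
  -- the key identity
  have hId : ∀ (u : TensorProduct ℝ L E) (v : TensorProduct ℝ L (Zsub →L[ℝ] ℝ)),
      TensorProduct.map LinearMap.id (Imap Zsub Q hmem u) v =
        LinearMap.rTensor E (Jmap v ∘ₗ Qr)
          (LinearMap.rTensor E (Q : L →ₗ[ℝ] L) u) := by
    intro u v
    induction v using TensorProduct.induction_on with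
    | zero => simp
    | tmul η g =>
      induction u using TensorProduct.induction_on with
      | zero => simp [Imap]
      | tmul ξ x =>
        simp only [TensorProduct.map_tmul, LinearMap.id_coe, id_eq,
          LinearMap.rTensor_tmul, LinearMap.coe_comp, Function.comp_apply,
          Jmap_tmul]
        have hQQ : Qr ((Q : L →ₗ[ℝ] L) ξ) = Qr ξ := by
          apply Subtype.ext
          exact hfix (Q ξ) (hmem ξ)
        rw [hQQ]
        have : Imap Zsub Q hmem (ξ ⊗ₜ[ℝ] x) g = g (Qr ξ) • x := by
          simp [Imap, hQr]
        rw [this, TensorProduct.tmul_smul, TensorProduct.smul_tmul']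
      | add u₁ u₂ h₁ h₂ =>
        have hIadd : Imap Zsub Q hmem (u₁ + u₂) =
            Imap Zsub Q hmem u₁ + Imap Zsub Q hmem u₂ := by
          ext g'; simp [Imap]
        rw [hIadd, TensorProduct.map_add_right, LinearMap.add_apply, h₁, h₂,
          map_add, map_add]
    | add v₁ v₂ h₁ h₂ =>
      rw [map_add, h₁, h₂, map_add, LinearMap.add_comp, LinearMap.rTensor_add,
        LinearMap.add_apply]
  intro u
  refine ⟨part1 u, ?_, ?_⟩
  · -- membership: witness w
    refine ⟨∑ k, (b k : L) ⊗ₜ[ℝ] estar k, ?_, by rw [part1 u]⟩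
    refine injNorm_le _ zero_le_one fun f φ hf hφ => ?_
    simp only [map_sum, TensorProduct.map_tmul, TensorProduct.lid_tmul,
      ContinuousLinearMap.coe_coe, smul_eq_mul]
    have hsum : ∑ k, f (b k : L) * φ (estar k) = φ (∑ k, f (b k : L) • estar k) := by
      rw [map_sum]
      simp [mul_comm]
    rw [hsum]
    set h : Zsub →L[ℝ] ℝ := ∑ k, f (b k : L) • estar k with hh
    have hhnorm : ‖h‖ ≤ 1 := by
      refine ContinuousLinearMap.opNorm_le_bound _ zero_le_one fun z => ?_
      have hhz : h z = f (z : L) := by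
        simp only [hh, ContinuousLinearMap.sum_apply, ContinuousLinearMap.smul_apply,
          smul_eq_mul]
        rw [← hexpand z, map_sum]
        simp [mul_comm]
      rw [hhz, one_mul]
      calc ‖f (z : L)‖ ≤ ‖f‖ * ‖(z : L)‖ := f.le_opNorm _
        _ ≤ 1 * ‖(z : L)‖ := by gcongr
        _ = ‖z‖ := by rw [one_mul]; rfl
    calc |φ h| ≤ ‖φ‖ * ‖h‖ := φ.le_opNorm h
      _ ≤ 1 * 1 := by gcongr
      _ = 1 := one_mul 1
  · -- upper bound
    rintro r ⟨v, hv1, rfl⟩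
    set Jc : Zsub →L[ℝ] L := LinearMap.toContinuousLinearMap (Jmap v) with hJc
    set Tc : L →L[ℝ] L := Jc.comp (Q.codRestrict Zsub hmem) with hTc
    have hcoe : (Tc : L →ₗ[ℝ] L) = Jmap v ∘ₗ Qr := by
      ext ξ
      simp [hTc, hJc, hQr]
    have hTcnorm : ‖Tc‖ ≤ 1 := by
      refine ContinuousLinearMap.opNorm_le_bound _ zero_le_one fun ξ => ?_
      have h1 : Tc ξ = Jmap v (Qr ξ) := by
        simp [hTc, hJc, hQr]
        rfl
      rw [h1, one_mul]
      have h2 : ‖(Qr ξ : Zsub)‖ = ‖Q ξ‖ := rfl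
      calc ‖Jmap v (Qr ξ)‖ ≤ injNorm L (Zsub →L[ℝ] ℝ) v * ‖(Qr ξ : Zsub)‖ :=
            hJnorm v _
        _ ≤ 1 * ‖Q ξ‖ := by rw [h2]; gcongr
        _ ≤ 1 * (‖Q‖ * ‖ξ‖) := by gcongr; exact Q.le_opNorm ξ
        _ ≤ 1 * (1 * ‖ξ‖) := by gcongr
        _ = ‖ξ‖ := by ring
    calc N (TensorProduct.map LinearMap.id (Imap Zsub Q hmem u) v)
        = N (LinearMap.rTensor E (Tc : L →ₗ[ℝ] L)
            (LinearMap.rTensor E (Q : L →ₗ[ℝ] L) u)) := by rw [hId u v, hcoe]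
      _ ≤ ‖Tc‖ * N (LinearMap.rTensor E (Q : L →ₗ[ℝ] L) u) := hcontr Tc _
      _ ≤ 1 * N (LinearMap.rTensor E (Q : L →ₗ[ℝ] L) u) := by
          gcongr; exact hNnonneg _
      _ = N (LinearMap.rTensor E (Q : L →ₗ[ℝ] L) u) := one_mul _
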